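/- Let σ, k be continuous on (0,∞) with σ > 0, γ(x) = exp(-∫_ξ^x 2k(s)/σ²(s) ds), constant rate r, λ > r, and let h be a positive increasing C² solution of (1/2)σ²h'' + kh' - rh = -λh with h(ξ) = 1. If ∫_ξ^∞ γ(x)∫_ξ^x 1/(σ²(s)γ(s)) ds dx = ∞ (i.e., ∞ is inaccessible), then ∫_ξ^∞ γ(x) dx = ∞. -/

import Mathlib

open Set MeasureTheory intervalIntegral

/-- Converse: if `∞` is inaccessible and there exists a positive increasing
solution, then the scale integral diverges. -/
theorem scale_divergent_of_increasing
    (σ k : ℝ → ℝ) (r lam ξ : ℝ) (hξ : 0 < ξ) (hlam : r < lam)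
    (hσc : ContinuousOn σ (Ioi 0)) (hkc : ContinuousOn k (Ioi 0))
    (hσ : ∀ x ∈ Ioi (0:ℝ), 0 < σ x)
    (γ : ℝ → ℝ)
    (hγ : ∀ x, γ x = Real.exp (-∫ s in ξ..x, 2 * k s / (σ s)^2))
    (hinacc : ¬ IntegrableOn
      (fun x => γ x * ∫ s in ξ..x, 1 / ((σ s)^2 * γ s)) (Ioi ξ) volume)
    (h : ℝ → ℝ) (hh : ContDiffOn ℝ 2 h (Ioi 0))
    (hpos : ∀ x ∈ Ioi (0:ℝ), 0 < h x) (h1 : h ξ = 1)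
    (hinc : ∀ x ∈ Ioi (0:ℝ), 0 < deriv h x)
    (hode : ∀ x ∈ Ioi (0:ℝ),
      (1/2) * (σ x)^2 * deriv (deriv h) x + k x * deriv h x - r * h x
        = -lam * h x) :
    ¬ IntegrableOn γ (Ioi ξ) volume := by
  intro hint
  apply hinacc
  set g : ℝ → ℝ := fun s => 2 * k s / (σ s)^2 with hg
  have hγfun : γ = fun x => Real.exp (-∫ s in ξ..x, g s) := funext hγ
  have hγpos : ∀ x, 0 < γ x := fun x => by rw [hγ x]; exact Real.exp_pos _
  have hgc : ContinuousOn g (Ioi 0) := by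
    apply ContinuousOn.div (by fun_prop) (by fun_prop)
    intro x hx; exact pow_ne_zero _ (hσ x hx).ne'
  have hsub : ∀ x ∈ Ioi (0:ℝ), uIcc ξ x ⊆ Ioi 0 := by
    intro x hx
    rcases le_total ξ x with hle | hle
    · rw [uIcc_of_le hle]; exact fun s hs => lt_of_lt_of_le hξ hs.1
    · rw [uIcc_of_ge hle]; exact fun s hs => lt_of_lt_of_le hx hs.1
  have hgint : ∀ x ∈ Ioi (0:ℝ), IntervalIntegrable g volume ξ x := by
    intro x hx
    exact (hgc.mono (hsub x hx)).intervalIntegrable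
  -- derivative of γ
  have hγderiv : ∀ x ∈ Ioi (0:ℝ), HasDerivAt γ (-(g x) * γ x) x := by
    intro x hx
    have hI : HasDerivAt (fun u => ∫ s in ξ..u, g s) (g x) x := by
      refine intervalIntegral.integral_hasDerivAt_right (hgint x hx) ?_ ?_
      · exact (hgc.stronglyMeasurableAtFilter isOpen_Ioi x hx)
      · exact hgc.continuousAt (isOpen_Ioi.mem_nhds hx)
    have h2 := (hI.neg).exp
    rw [hγfun]
    convert h2 using 1
    show -g x * Real.exp (-∫ s in ξ..x, g s)
        = Real.exp (-∫ s in ξ..x, g s) * -g x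
    ring
    rfl
  have hγcont : ContinuousOn γ (Ioi 0) :=
    fun x hx => ((hγderiv x hx).continuousAt).continuousWithinAt
  -- h and its derivatives
  have hcd1 : ContDiffOn ℝ 1 (deriv h) (Ioi 0) :=
    hh.deriv_of_isOpen isOpen_Ioi (by norm_num)
  have hh'deriv : ∀ x ∈ Ioi (0:ℝ), HasDerivAt (deriv h) (deriv (deriv h) x) x := by
    intro x hx
    exact ((hcd1.differentiableOn one_ne_zero).differentiableAt
      (isOpen_Ioi.mem_nhds hx)).hasDerivAt
  -- G = h' / γ
  set G : ℝ → ℝ := fun x => deriv h x / γ x with hG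
  have hGderiv : ∀ x ∈ Ioi (0:ℝ),
      HasDerivAt G (2 * (r - lam) * (h x / ((σ x)^2 * γ x))) x := by
    intro x hx
    have hd := (hh'deriv x hx).div (hγderiv x hx) (hγpos x).ne'
    refine (hd : HasDerivAt G _ x).congr_deriv (Eq.symm ?_)
    have hσx : (σ x) ≠ 0 := (hσ x hx).ne'
    have hγx : γ x ≠ 0 := (hγpos x).ne'
    have hode' := hode x hx
    have e1 : σ x^2 * deriv (deriv h) x + 2 * k x * deriv h x = 2 * (r - lam) * h x := by
      linear_combination 2 * hode'
    have e2 : 2 * (r - lam) * (h x / ((σ x)^2 * γ x))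
        = (σ x^2 * deriv (deriv h) x + 2 * k x * deriv h x) / ((σ x)^2 * γ x) := by
      rw [e1]; ring
    rw [e2, show g x = 2 * k x / σ x ^ 2 from rfl]
    field_simp
    ring
  have hgammaξ : γ ξ = 1 := by
    rw [hγ ξ, intervalIntegral.integral_same, neg_zero, Real.exp_zero]
  have hGξ : G ξ = deriv h ξ := by rw [hG]; simp [hgammaξ]
  -- monotonicity of h
  have hmono : StrictMonoOn h (Ioi 0) := by
    apply strictMonoOn_of_deriv_pos (convex_Ioi 0) (hh.continuousOn)
    rwa [interior_Ioi]
  -- positivity of denominator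
  have hden : ∀ s ∈ Ioi (0:ℝ), 0 < (σ s)^2 * γ s :=
    fun s hs => mul_pos (pow_pos (hσ s hs) 2) (hγpos s)
  have hdencont : ContinuousOn (fun s => (σ s)^2 * γ s) (Ioi 0) :=
    ((hσc.pow 2).mul hγcont)
  have hcont1 : ContinuousOn (fun s => 1 / ((σ s)^2 * γ s)) (Ioi 0) := by
    apply ContinuousOn.div continuousOn_const hdencont
    intro s hs; exact (hden s hs).ne'
  have hconth : ContinuousOn (fun s => h s / ((σ s)^2 * γ s)) (Ioi 0) := by
    apply ContinuousOn.div hh.continuousOn hdencont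
    intro s hs; exact (hden s hs).ne'
  set C : ℝ := deriv h ξ / (2 * (lam - r)) with hC
  have hlr : 0 < 2 * (lam - r) := by linarith
  -- the fundamental bound
  have key : ∀ x ∈ Ioi ξ, (∫ s in ξ..x, 1 / ((σ s)^2 * γ s)) ≤ C := by
    intro x hx
    have hxpos : x ∈ Ioi (0:ℝ) := lt_trans hξ hx
    have hxsub := hsub x hxpos
    have hftc : (∫ s in ξ..x, 2 * (r - lam) * (h s / ((σ s)^2 * γ s)))
        = G x - G ξ := by
      apply intervalIntegral.integral_eq_sub_of_hasDerivAt
      · intro s hs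
        exact hGderiv s (hxsub hs)
      · exact (((hconth.mono hxsub).const_smul
          (2 * (r - lam))).intervalIntegrable)
    rw [intervalIntegral.integral_const_mul, hGξ] at hftc
    have hGxpos : 0 < G x := div_pos (hinc x hxpos) (hγpos x)
    have h2 : 2 * (lam - r) * (∫ s in ξ..x, h s / ((σ s)^2 * γ s))
        = deriv h ξ - G x := by linear_combination -hftc
    have hJ1 : (∫ s in ξ..x, h s / ((σ s)^2 * γ s)) ≤ C := by
      rw [hC, le_div_iff₀ hlr]
      nlinarith [h2, hGxpos]
    have hJ0 : (∫ s in ξ..x, 1 / ((σ s)^2 * γ s))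
        ≤ ∫ s in ξ..x, h s / ((σ s)^2 * γ s) := by
      apply intervalIntegral.integral_mono_on (le_of_lt hx)
      · exact ((hcont1.mono hxsub).intervalIntegrable)
      · exact ((hconth.mono hxsub).intervalIntegrable)
      · intro s hs
        have hs0 : s ∈ Ioi (0:ℝ) := lt_of_lt_of_le hξ hs.1
        have h1s : 1 ≤ h s := by
          rcases eq_or_lt_of_le hs.1 with heq | hlt
          · rw [← heq, h1]
          · rw [← h1]; exact le_of_lt (hmono (mem_Ioi.mpr hξ) hs0 hlt)
        gcongr
        exact (hden s hs0).le
    exact le_trans hJ0 hJ1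
  -- continuity of the inner integral
  have hJcont : ContinuousOn (fun x => ∫ s in ξ..x, 1 / ((σ s)^2 * γ s)) (Ioi 0) := by
    intro x hx
    have hd : HasDerivAt (fun u => ∫ s in ξ..u, 1 / ((σ s)^2 * γ s))
        (1 / ((σ x)^2 * γ x)) x :=
      intervalIntegral.integral_hasDerivAt_right
        ((hcont1.mono (hsub x hx)).intervalIntegrable)
        (hcont1.stronglyMeasurableAtFilter isOpen_Ioi x hx)
        (hcont1.continuousAt (isOpen_Ioi.mem_nhds hx))
    exact hd.continuousAt.continuousWithinAt
  have hIoisub : Ioi ξ ⊆ Ioi (0:ℝ) := fun x hx => lt_trans hξ hx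
  refine Integrable.mono' (g := fun x => C * γ x) (hint.const_mul C)
    (((hγcont.mono hIoisub).mul (hJcont.mono hIoisub)).aestronglyMeasurable
      measurableSet_Ioi) ?_
  filter_upwards [ae_restrict_mem measurableSet_Ioi] with x hx
  have hJ0 : 0 ≤ ∫ s in ξ..x, 1 / ((σ s)^2 * γ s) := by
    apply intervalIntegral.integral_nonneg (le_of_lt hx)
    intro s hs
    have hs0 : s ∈ Ioi (0:ℝ) := lt_of_lt_of_le hξ hs.1
    exact le_of_lt (div_pos one_pos (hden s hs0))
  rw [Real.norm_eq_abs, abs_of_nonneg (mul_nonneg (hγpos x).le hJ0)]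
  calc γ x * (∫ s in ξ..x, 1 / ((σ s)^2 * γ s))
      ≤ γ x * C := mul_le_mul_of_nonneg_left (key x hx) (hγpos x).le
    _ = C * γ x := mul_comm _ _
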